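/- (Finite length and iteration complexity.) Let F = f + r and assume F is bounded below on U by v ∈ ℝ. Then: (i) for every K, Σ_{k=0}^{K−1} d_A(θ_k, θ_{k+1}) ≤ F(θ_0) − v, so the series Σ_k d_A(θ_k, θ_{k+1}) converges; (ii) for every ε > 0 and every K, if d_A(θ_k, θ_{k+1}) > ε for all k < K, then K ≤ (F(θ_0) − v)/ε. -/

import Mathlib

open scoped RealInnerProductSpace

open Filter Set Topology

lemma slope_tendsto' {H : Type*} [NormedAddCommGroup H] [InnerProductSpace ℝ H]
    [CompleteSpace H] {φ : H → ℝ} {x gx : H} (h : HasGradientAt φ gx x) (w : H) :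
    Tendsto (fun t : ℝ => (φ (x + t • w) - φ x)/t) (𝓝[>] 0) (𝓝 ⟪gx, w⟫) := by
  have hc : HasDerivAt (fun t : ℝ => x + t • w) w 0 := by
    simpa using ((hasDerivAt_id (0:ℝ)).smul_const w).const_add x
  have hcomp : HasDerivAt (fun t : ℝ => φ (x + t • w)) ⟪gx, w⟫ 0 := by
    have hx : x = x + (0:ℝ) • w := by simp
    have := ((hx ▸ h).hasFDerivAt.comp_hasDerivAt 0 hc)
    simpa [Function.comp_def] using this
  have := hasDerivAt_iff_tendsto_slope.1 hcomp
  have h2 := this.mono_left (nhdsWithin_mono 0 (by intro t ht; exact ne_of_gt ht : Ioi (0:ℝ) ⊆ {0}ᶜ))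
  refine h2.congr' ?_
  filter_upwards [self_mem_nhdsWithin] with t ht
  simp [slope_def_field, div_eq_inv_mul]

lemma tangent_le' {H : Type*} [NormedAddCommGroup H] [InnerProductSpace ℝ H]
    [CompleteSpace H] {U : Set H} (hUc : Convex ℝ U) {φ : H → ℝ} (hφ : ConvexOn ℝ U φ)
    {x y gx : H} (hx : x ∈ U) (hy : y ∈ U) (h : HasGradientAt φ gx x) :
    ⟪gx, y - x⟫ ≤ φ y - φ x := by
  refine le_of_tendsto (slope_tendsto' h (y - x)) ?_
  filter_upwards [Ioc_mem_nhdsGT (zero_lt_one)] with t ht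
  have hz : x + t • (y - x) = (1 - t) • x + t • y := by
    rw [smul_sub]; module
  have hcv := hφ.2 hx hy (by linarith [ht.2] : (0:ℝ) ≤ 1 - t) ht.1.le (by ring)
  rw [div_le_iff₀ ht.1, hz]
  calc φ ((1 - t) • x + t • y) - φ x ≤ ((1-t) * φ x + t * φ y) - φ x := by simp only [smul_eq_mul] at hcv; linarith
    _ = (φ y - φ x) * t := by ring


/-- Finite length and iteration complexity for the Bregman proximal-gradient sequence:
if `F = f + r` is bounded below on `U` by `v`, then (i) the partial sums
`Σ_{k<K} d_A(θ_k, θ_{k+1})` are bounded by `F(θ_0) - v` and the series converges, and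
(ii) if `d_A(θ_k, θ_{k+1}) > ε` for all `k < K` then `K ≤ (F(θ_0) - v)/ε`. -/
theorem statement18
    {H : Type*} [NormedAddCommGroup H] [InnerProductSpace ℝ H] [FiniteDimensional ℝ H]
    (U : Set H) (hUo : IsOpen U) (hUc : Convex ℝ U)
    (A : H → ℝ) (hAconv : ConvexOn ℝ U A)
    (gA : H → H) (hgA : ∀ θ ∈ U, HasGradientAt A (gA θ) θ)
    (dA : H → H → ℝ) (hdA : ∀ θ θ', dA θ θ' = A θ - A θ' - ⟪gA θ', θ - θ'⟫)
    (f : H → ℝ) (gf : H → H) (hgf : ∀ θ ∈ U, HasGradientAt f (gf θ) θ)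
    (hrel : ConvexOn ℝ U (fun θ => A θ - f θ))
    (r : H → ℝ) (hr : ConvexOn ℝ Set.univ r)
    (τ : ℕ → ℝ) (hτ : ∀ k, τ k ∈ Set.Ioc (0:ℝ) 1)
    (θ : ℕ → H) (hθU : ∀ k, θ k ∈ U)
    (hmin : ∀ k, ∀ θ' ∈ U,
      r (θ (k+1)) + ⟪gf (θ k), θ (k+1) - θ k⟫ + (1/τ (k+1)) * dA (θ (k+1)) (θ k) ≤
      r θ' + ⟪gf (θ k), θ' - θ k⟫ + (1/τ (k+1)) * dA θ' (θ k))
    (v : ℝ) (hv : ∀ θ' ∈ U, v ≤ f θ' + r θ') :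
    ((∀ K : ℕ, ∑ k ∈ Finset.range K, dA (θ k) (θ (k+1)) ≤ (f (θ 0) + r (θ 0)) - v) ∧
      Summable (fun k => dA (θ k) (θ (k+1)))) ∧
    (∀ ε : ℝ, 0 < ε → ∀ K : ℕ,
      (∀ k < K, ε < dA (θ k) (θ (k+1))) → (K : ℝ) ≤ ((f (θ 0) + r (θ 0)) - v) / ε) := by
  -- nonnegativity of the Bregman divergence
  have hdAnn : ∀ x ∈ U, ∀ y ∈ U, 0 ≤ dA x y := by
    intro x hx y hy
    rw [hdA]
    have := tangent_le' hUc hAconv hy hx (hgA y hy)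
    linarith
  -- key per-step decrease
  have key : ∀ k, dA (θ k) (θ (k+1)) ≤
      (f (θ k) + r (θ k)) - (f (θ (k+1)) + r (θ (k+1))) := by
    intro k
    set x := θ k with hxdef
    set y := θ (k+1) with hydef
    have hx : x ∈ U := hθU k
    have hy : y ∈ U := hθU (k+1)
    set c := 1 / τ (k+1) with hcdef
    have hτk := hτ (k+1)
    have hc1 : 1 ≤ c := by
      rw [hcdef]
      rw [le_div_iff₀ hτk.1]
      simpa using hτk.2
    have hcpos : 0 < c := lt_of_lt_of_le one_pos hc1
    -- Step B: limit inequality from minimality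
    have starB : r y + ⟪gf x, y - x⟫ + c * (⟪gA y, y - x⟫ - ⟪gA x, y - x⟫) ≤ r x := by
      have htend : Filter.Tendsto
          (fun t : ℝ => r y + ⟪gf x, y - x⟫ + c * (-((A (y + t • (x - y)) - A y)/t) - ⟪gA x, y - x⟫))
          (𝓝[>] 0)
          (𝓝 (r y + ⟪gf x, y - x⟫ + c * (⟪gA y, y - x⟫ - ⟪gA x, y - x⟫))) := by
        have h1 := slope_tendsto' (hgA y hy) (x - y)
        have h2 : (⟪gA y, y - x⟫ : ℝ) = -⟪gA y, x - y⟫ := by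
          rw [← neg_sub x y, inner_neg_right]
        rw [h2]
        exact (tendsto_const_nhds.add (((h1.neg.sub_const ⟪gA x, y - x⟫).const_mul c)))
      refine le_of_tendsto htend ?_
      filter_upwards [Ioc_mem_nhdsGT (zero_lt_one)] with t ht
      have hzU : y + t • (x - y) ∈ U := by
        have hz : y + t • (x - y) = (1 - t) • y + t • x := by rw [smul_sub]; module
        rw [hz]
        exact hUc hy hx (by linarith [ht.2]) ht.1.le (by ring)
      have hm := hmin k _ hzU
      rw [hdA, hdA] at hm
      have hiz : y + t • (x - y) - x = (1 - t) • (y - x) := by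
        rw [smul_sub, smul_sub]; module
      have hinner1 : ⟪gf x, y + t • (x - y) - x⟫ = (1 - t) * ⟪gf x, y - x⟫ := by
        rw [hiz, real_inner_smul_right]
      have hinner2 : ⟪gA x, y + t • (x - y) - x⟫ = (1 - t) * ⟪gA x, y - x⟫ := by
        rw [hiz, real_inner_smul_right]
      have hrz : r (y + t • (x - y)) ≤ (1 - t) * r y + t * r x := by
        have hz : y + t • (x - y) = (1 - t) • y + t • x := by rw [smul_sub]; module
        rw [hz]
        have := hr.2 (Set.mem_univ y) (Set.mem_univ x)
          (by linarith [ht.2] : (0:ℝ) ≤ 1 - t) ht.1.le (by ring)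
        simpa [smul_eq_mul] using this
      rw [← hxdef, ← hydef, ← hcdef] at hm
      rw [hinner1, hinner2] at hm
      have hAy : c * (-(((A (y + t • (x - y)) - A y))) - ⟪gA x, y - x⟫ * t) ≤
          (r x - r y - ⟪gf x, y - x⟫) * t := by
        nlinarith [hm, hrz, ht.1]
      calc r y + ⟪gf x, y - x⟫ + c * (-((A (y + t • (x - y)) - A y)/t) - ⟪gA x, y - x⟫)
          = r y + ⟪gf x, y - x⟫ +
            (c * (-(A (y + t • (x - y)) - A y) - ⟪gA x, y - x⟫ * t)) / t := by
            field_simp [ht.1.ne']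
            try ring
            try simp
        _ ≤ r y + ⟪gf x, y - x⟫ + ((r x - r y - ⟪gf x, y - x⟫) * t) / t := by
            linarith [(div_le_div_iff_of_pos_right ht.1).2 hAy]
        _ = r x := by
            rw [mul_div_assoc, div_self ht.1.ne', mul_one]
            ring
    -- Step A: descent lemma from convexity of A - f
    have stepA : f y - f x - ⟪gf x, y - x⟫ ≤ A y - A x - ⟪gA x, y - x⟫ := by
      have hgr : HasGradientAt (fun θ => A θ - f θ) (gA x - gf x) x := by
        rw [hasGradientAt_iff_hasFDerivAt, map_sub]
        exact (hgA x hx).hasFDerivAt.sub (hgf x hx).hasFDerivAt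
      have := tangent_le' hUc hrel hx hy hgr
      have hs : (⟪gA x - gf x, y - x⟫ : ℝ) = ⟪gA x, y - x⟫ - ⟪gf x, y - x⟫ := by
        rw [inner_sub_left]
      rw [hs] at this
      linarith
    -- combine
    have ha1 : 0 ≤ dA x y := hdAnn x hx y hy
    have ha2 : 0 ≤ dA y x := hdAnn y hy x hx
    have hsum : ⟪gA y, y - x⟫ - ⟪gA x, y - x⟫ = dA x y + dA y x := by
      rw [hdA, hdA]
      have h2 : (⟪gA y, x - y⟫ : ℝ) = -⟪gA y, y - x⟫ := by
        rw [← neg_sub y x, inner_neg_right]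
      linarith
    rw [hsum] at starB
    have ha2' : dA y x = A y - A x - ⟪gA x, y - x⟫ := hdA y x
    nlinarith [mul_nonneg (sub_nonneg.2 hc1) (add_nonneg ha1 ha2)]
  -- F = f + r values along the sequence
  have hFbound : ∀ K : ℕ, ∑ k ∈ Finset.range K, dA (θ k) (θ (k+1)) ≤
      (f (θ 0) + r (θ 0)) - v := by
    intro K
    have htel : ∑ k ∈ Finset.range K,
        ((f (θ k) + r (θ k)) - (f (θ (k+1)) + r (θ (k+1)))) =
        (f (θ 0) + r (θ 0)) - (f (θ K) + r (θ K)) :=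
      Finset.sum_range_sub' (fun k => f (θ k) + r (θ k)) K
    have h1 : ∑ k ∈ Finset.range K, dA (θ k) (θ (k+1)) ≤
        ∑ k ∈ Finset.range K, ((f (θ k) + r (θ k)) - (f (θ (k+1)) + r (θ (k+1)))) :=
      Finset.sum_le_sum (fun k _ => key k)
    have h2 := hv (θ K) (hθU K)
    rw [htel] at h1
    linarith
  refine ⟨⟨hFbound, ?_⟩, ?_⟩
  · exact summable_of_sum_range_le
      (fun k => hdAnn _ (hθU k) _ (hθU (k+1))) hFbound
  · intro ε hε K hK
    rw [le_div_iff₀ hε]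
    have h1 : (K : ℝ) * ε = ∑ _k ∈ Finset.range K, ε := by
      simp [mul_comm]
    rw [h1]
    calc ∑ _k ∈ Finset.range K, ε ≤ ∑ k ∈ Finset.range K, dA (θ k) (θ (k+1)) :=
          Finset.sum_le_sum (fun k hk => (hK k (Finset.mem_range.1 hk)).le)
      _ ≤ (f (θ 0) + r (θ 0)) - v := hFbound K
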